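/- Let a, w, b, a', w', b' be elements of the free monoid on an alphabet α with w ≠ 1. Then there exist an integer m ≥ 1 and N ∈ ℕ such that for all k ≥ N: a * w^k * b belongs to the sandwich a'⟨w'⟩b' if and only if a * w^{k+m} * b belongs to a'⟨w'⟩b'. (Membership of a w^k b in a fixed sandwich is an eventually periodic condition on k.) -/
import Mathlib


/-- The sandwich `a⟨w⟩b = {a * w^n * b : n ∈ ℕ}` in a monoid. -/
def sandwich {S : Type*} [Monoid S] (a w b : S) : Set S :=
  Set.range fun n : ℕ => a * w ^ n * b

namespace SandwichAux

open FreeMonoid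

theorem length_pow {α : Type*} (x : FreeMonoid α) (n : ℕ) :
    (x ^ n).length = n * x.length := by
  induction n with
  | zero => simp [FreeMonoid.length_one]
  | succ n ih => rw [pow_succ, FreeMonoid.length_mul, ih]; ring

/-- If `x * c = y * d` and `x` is shorter than `y`, then `x` is a prefix of `y`. -/
theorem exists_mul_eq {α : Type*} {x c y d : FreeMonoid α}
    (h : x * c = y * d) (hle : x.length ≤ y.length) : ∃ β, y = x * β := by
  have h' : x.toList ++ c.toList = y.toList ++ d.toList := congrArg toList h
  have hx : x.toList <+: y.toList ++ d.toList := ⟨c.toList, h'⟩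
  have hy : y.toList <+: y.toList ++ d.toList := List.prefix_append _ _
  obtain ⟨r, hr⟩ := List.prefix_of_prefix_length_le hx hy hle
  refine ⟨FreeMonoid.ofList r, FreeMonoid.toList.injective ?_⟩
  simpa using hr.symm

theorem eq_of_mul_eq_of_length_eq {α : Type*} {x c y d : FreeMonoid α}
    (h : x * c = y * d) (hlen : x.length = y.length) : x = y :=
  FreeMonoid.toList.injective (List.append_inj_left (congrArg toList h) hlen)

/-- Core commutation lemma: if `β` is a prefix of `u ^ k` and
`β * v ^ n * c = u ^ k * d` with everything long enough, then
`u ^ |v| * β = β * v ^ |u|`. -/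
theorem core {α : Type*} {u v β z c d : FreeMonoid α} {k n : ℕ}
    (h1 : β * z = u ^ k)
    (h2 : β * v ^ n * c = u ^ k * d)
    (h3 : β.length + u.length * v.length ≤ k * u.length)
    (h4 : u.length ≤ n) :
    u ^ v.length * β = β * v ^ u.length := by
  -- LHS is a prefix of `u ^ (v.length + k)`
  have e1 : (u ^ v.length * β) * z = u ^ (v.length + k) := by
    rw [mul_assoc, h1, ← pow_add]
  -- `β * v ^ u.length` is a prefix of `u ^ k`
  have hn : n = u.length + (n - u.length) := by omega
  have e2 : (β * v ^ u.length) * (v ^ (n - u.length) * c) = u ^ k * d := by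
    rw [← h2, hn, pow_add]
    simp [mul_assoc]
  have hlen2 : (β * v ^ u.length).length ≤ (u ^ k).length := by
    rw [FreeMonoid.length_mul, length_pow, length_pow]
    exact h3
  obtain ⟨r, hr⟩ := exists_mul_eq e2 hlen2
  have e3 : (β * v ^ u.length) * (r * u ^ v.length) = u ^ (v.length + k) := by
    rw [← mul_assoc, ← hr, ← pow_add, add_comm]
  have hlen : (u ^ v.length * β).length = (β * v ^ u.length).length := by
    simp only [FreeMonoid.length_mul, length_pow]
    ring
  exact eq_of_mul_eq_of_length_eq (e1.trans e3.symm) hlen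

/-- The shifting equivalence that follows from the commutation relation. -/
theorem shift {α : Type*} {u v β c d : FreeMonoid α}
    (hcomm : u ^ v.length * β = β * v ^ u.length) (k n : ℕ) :
    β * v ^ (n + u.length) * c = u ^ (k + v.length) * d ↔
      β * v ^ n * c = u ^ k * d := by
  have hvpow : v ^ (n + u.length) = v ^ u.length * v ^ n := by
    rw [← pow_add, add_comm]
  have key : β * v ^ (n + u.length) * c = u ^ v.length * (β * v ^ n * c) := by
    calc β * v ^ (n + u.length) * c
        = (β * v ^ u.length) * (v ^ n * c) := by rw [hvpow]; simp [mul_assoc]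
      _ = (u ^ v.length * β) * (v ^ n * c) := by rw [← hcomm]
      _ = u ^ v.length * (β * v ^ n * c) := by simp [mul_assoc]
  have key2 : u ^ (k + v.length) * d = u ^ v.length * (u ^ k * d) := by
    rw [← mul_assoc, ← pow_add, add_comm]
  rw [key, key2]
  exact mul_right_inj _

/-- The main bridge: a single long enough equality between the two sandwich forms
implies the full shifting equivalence for all exponents. -/
theorem bridge {α : Type*} {a w b a' w' b' : FreeMonoid α} {K n : ℕ}
    (hL : 1 ≤ w.length) (hL' : 1 ≤ w'.length)
    (h : a * w ^ K * b = a' * w' ^ n * b')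
    (hK : a.length + b.length + a'.length + b'.length + w.length * w'.length ≤ K) :
    ∀ j i, (a * w ^ j * b = a' * w' ^ i * b' ↔
      a * w ^ (j + w'.length) * b = a' * w' ^ (i + w.length) * b') := by
  have hlen : a.length + K * w.length + b.length = a'.length + n * w'.length + b'.length := by
    have := congrArg FreeMonoid.length h
    simpa [FreeMonoid.length_mul, length_pow] using this
  have hKP : K ≤ K * w.length := Nat.le_mul_of_pos_right K hL
  have hRR' : w.length * w'.length = w'.length * w.length := mul_comm _ _
  have hQ : w.length * w'.length ≤ n * w'.length := by omega
  have hnL : w.length ≤ n := Nat.le_of_mul_le_mul_right hQ hL'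
  have h' : a * (w ^ K * b) = a' * (w' ^ n * b') := by
    simpa [mul_assoc] using h
  rcases le_or_gt a.length a'.length with hle | hlt
  · -- `a` is a prefix of `a'`
    obtain ⟨β, hβ⟩ := exists_mul_eq h' hle
    have hβlen : a'.length = a.length + β.length := by
      have := congrArg FreeMonoid.length hβ
      simpa [FreeMonoid.length_mul] using this
    have h2 : β * (w' ^ n * b') = w ^ K * b := by
      apply mul_left_cancel (a := a)
      rw [← mul_assoc, ← hβ]
      exact h'.symm
    obtain ⟨z, hz⟩ := exists_mul_eq h2 (by rw [length_pow]; omega)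
    have hcomm : w ^ w'.length * β = β * w' ^ w.length :=
      core hz.symm (by rw [mul_assoc]; exact h2) (by omega) hnL
    have conv : ∀ j i, (a * w ^ j * b = a' * w' ^ i * b') ↔
        (β * w' ^ i * b' = w ^ j * b) := by
      intro j i
      constructor
      · intro hh
        apply mul_left_cancel (a := a)
        calc a * (β * w' ^ i * b') = (a * β) * w' ^ i * b' := by simp [mul_assoc]
          _ = a' * w' ^ i * b' := by rw [← hβ]
          _ = a * w ^ j * b := hh.symm
          _ = a * (w ^ j * b) := by simp [mul_assoc]
      · intro hh
        calc a * w ^ j * b = a * (w ^ j * b) := by simp [mul_assoc]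
          _ = a * (β * w' ^ i * b') := by rw [hh]
          _ = (a * β) * w' ^ i * b' := by simp [mul_assoc]
          _ = a' * w' ^ i * b' := by rw [← hβ]
    intro j i
    have hs : β * w' ^ (i + w.length) * b' = w ^ (j + w'.length) * b ↔ β * w' ^ i * b' = w ^ j * b :=
      shift hcomm j i
    exact (conv j i).trans (hs.symm.trans (conv (j + w'.length) (i + w.length)).symm)
  · -- `a'` is a proper prefix of `a`
    obtain ⟨β, hβ⟩ := exists_mul_eq h'.symm (le_of_lt hlt)
    have hβlen : a.length = a'.length + β.length := by
      have := congrArg FreeMonoid.length hβ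
      simpa [FreeMonoid.length_mul] using this
    have h2 : β * (w ^ K * b) = w' ^ n * b' := by
      apply mul_left_cancel (a := a')
      rw [← mul_assoc, ← hβ]
      exact h'
    obtain ⟨z, hz⟩ := exists_mul_eq h2 (by rw [length_pow]; omega)
    have hKL' : w'.length ≤ K := by
      have : w'.length ≤ w.length * w'.length := Nat.le_mul_of_pos_left w'.length hL
      omega
    have hcomm : w' ^ w.length * β = β * w ^ w'.length :=
      core hz.symm (by rw [mul_assoc]; exact h2) (by omega) hKL'
    have conv : ∀ j i, (a * w ^ j * b = a' * w' ^ i * b') ↔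
        (β * w ^ j * b = w' ^ i * b') := by
      intro j i
      constructor
      · intro hh
        apply mul_left_cancel (a := a')
        calc a' * (β * w ^ j * b) = (a' * β) * w ^ j * b := by simp [mul_assoc]
          _ = a * w ^ j * b := by rw [← hβ]
          _ = a' * w' ^ i * b' := hh
          _ = a' * (w' ^ i * b') := by simp [mul_assoc]
      · intro hh
        calc a * w ^ j * b = (a' * β) * w ^ j * b := by rw [← hβ]
          _ = a' * (β * w ^ j * b) := by simp [mul_assoc]
          _ = a' * (w' ^ i * b') := by rw [hh]
          _ = a' * w' ^ i * b' := by simp [mul_assoc]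
    intro j i
    have hs : β * w ^ (j + w'.length) * b = w' ^ (i + w.length) * b' ↔ β * w ^ j * b = w' ^ i * b' :=
      shift hcomm i j
    exact (conv j i).trans (hs.symm.trans (conv (j + w'.length) (i + w.length)).symm)

end SandwichAux

theorem sandwich_membership_eventually_periodic
    {α : Type*} (a w b a' w' b' : FreeMonoid α) (hw : w ≠ 1) :
    ∃ (m : ℕ), 1 ≤ m ∧ ∃ N : ℕ, ∀ k ≥ N,
      (a * w ^ k * b ∈ sandwich a' w' b' ↔
        a * w ^ (k + m) * b ∈ sandwich a' w' b') := by
  classical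
  have hL : 1 ≤ w.length := by
    rcases Nat.eq_zero_or_pos w.length with h0 | h0
    · exact absurd (FreeMonoid.length_eq_zero.mp h0) hw
    · exact h0
  by_cases hw' : w' = 1
  · -- the sandwich is a single word; membership fails for all large `k`
    subst hw'
    refine ⟨1, le_rfl, a'.length + b'.length + 1, fun k hk => ?_⟩
    have key : ∀ j, k ≤ j → a * w ^ j * b ∉ sandwich a' 1 b' := by
      intro j hj hmem
      obtain ⟨n, hn⟩ := hmem
      have hlen := congrArg FreeMonoid.length hn
      simp only [FreeMonoid.length_mul, SandwichAux.length_pow,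
        FreeMonoid.length_one] at hlen
      have hjL : j ≤ j * w.length := Nat.le_mul_of_pos_right j hL
      omega
    constructor
    · intro h; exact absurd h (key k le_rfl)
    · intro h; exact absurd h (key (k + 1) (by omega))
  · have hL' : 1 ≤ w'.length := by
      rcases Nat.eq_zero_or_pos w'.length with h0 | h0
      · exact absurd (FreeMonoid.length_eq_zero.mp h0) hw'
      · exact h0
    refine ⟨w'.length, hL',
      a.length + b.length + a'.length + b'.length + w.length * w'.length + w'.length,
      fun k hk => ?_⟩
    constructor
    · rintro ⟨n, hn⟩
      have h := hn.symm
      have hb := SandwichAux.bridge hL hL' h (by omega)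
      exact ⟨n + w.length, ((hb k n).mp h).symm⟩
    · rintro ⟨n', hn'⟩
      have h := hn'.symm
      -- show `w.length ≤ n'` from lengths
      have hlen : a.length + (k + w'.length) * w.length + b.length =
          a'.length + n' * w'.length + b'.length := by
        have := congrArg FreeMonoid.length h
        simpa [FreeMonoid.length_mul, SandwichAux.length_pow] using this
      have hkP : k ≤ (k + w'.length) * w.length :=
        le_trans (Nat.le_add_right k w'.length) (Nat.le_mul_of_pos_right _ hL)
      have hcm : w.length * w'.length = w'.length * w.length := mul_comm _ _
      have hge : w.length * w'.length ≤ n' * w'.length := by omega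
      have hnL : w.length ≤ n' := Nat.le_of_mul_le_mul_right hge hL'
      have hb := SandwichAux.bridge hL hL' h (by omega)
      refine ⟨n' - w.length, ?_⟩
      have heq : a * w ^ (k + w'.length) * b =
          a' * w' ^ ((n' - w.length) + w.length) * b' := by
        rw [Nat.sub_add_cancel hnL]; exact h
      exact ((hb k (n' - w.length)).mpr heq).symm
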